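/- Theorem 3 (Heading alignment under saturated angular control). Assume the planar field χ_p is continuously differentiable with ‖χ_p(t)‖² > γ for some γ > 0 and all t ≥ 0, and θ satisfies the saturated control law θ̇(t) = Sat_a^b(θ̇_d(t) − k_θ ĥ(t)ᵀ E χ̂_p(t)) with k_θ > 0 and a < 0 < b. If (1) the initial angle difference satisfies σ(0) ≠ π, and (2) σ(t) ∈ [0, π) at every upper-saturation time t and σ(t) ∈ (−π, 0] at every lower-saturation time t, then the angle difference vanishes asymptotically: σ(t) → 0 as t → ∞. -/

import Mathlib

open Filter Topology Real

/-- saturation function `Sat_a^b(x) = min(max(x,a),b)` -/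
noncomputable def sat (a b x : ℝ) : ℝ := min (max x a) b

/-- **Theorem 3 (Heading alignment under saturated angular control).**
`(χ₁, χ₂)` is the planar guiding vector field along the trajectory (C¹, with squared
norm bounded below by `γ > 0`), `nrm` its norm, `θ` the yaw angle with heading
`ĥ = (cos θ, sin θ)`, `s = ĥᵀEχ̂_p` (with `E` the 90° rotation), `θd` the change rate
of the vector-field orientation, and `σ` the signed angle in `(-π, π]` from `χ̂_p` to
`ĥ` (so `sin σ = s` and `cos σ = ĥᵀχ̂_p`).  Under the saturated control law
`θ̇ = Sat_a^b(θd - k_θ s)`, if `σ(0) ≠ π` and the saturation-period conditions hold,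
then `σ(t) → 0`. -/
private lemma key_id (x1 x2 d1 d2 ct st P N : ℝ) (hN : N ≠ 0)
    (hN2 : N ^ 2 = x1 ^ 2 + x2 ^ 2) :
    ((-st * P * x1 + ct * d1 + (ct * P * x2 + st * d2)) * N
        - (ct * x1 + st * x2) * ((1 / (2 * N)) * (2 * x1 ^ 1 * d1 + 2 * x2 ^ 1 * d2))) / N ^ 2
      = ((st * x1 - ct * x2) / N)
          * (-((x1 / N) * (-d2) + (x2 / N) * d1) / N - P) := by
  have h2 : (ct*d1+st*d2)*N^2 - (ct*x1+st*x2)*(x1*d1+x2*d2)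
      = (st*x1 - ct*x2)*(x1*d2 - x2*d1) := by rw [hN2]; ring
  field_simp
  linear_combination N * h2 - (ct*d1+st*d2)*(N - 2*N^4) * hN2 + (ct*d1+st*d2)*(1 - 2*N^4) * hN2

theorem heading_alignment_saturated
    (χ₁ χ₂ : ℝ → ℝ) (hχ₁ : ContDiff ℝ 1 χ₁) (hχ₂ : ContDiff ℝ 1 χ₂)
    (γ : ℝ) (hγ : 0 < γ)
    (hlow : ∀ t : ℝ, 0 ≤ t → γ < χ₁ t ^ 2 + χ₂ t ^ 2)
    (θ σ : ℝ → ℝ)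
    (kθ a b : ℝ) (hkθ : 0 < kθ) (ha : a < 0) (hb : 0 < b)
    (nrm s θd : ℝ → ℝ)
    (hnrm : ∀ t, nrm t = Real.sqrt (χ₁ t ^ 2 + χ₂ t ^ 2))
    -- `s(t) = ĥ(t)ᵀ E χ̂_p(t)`
    (hs : ∀ t, s t = (Real.sin (θ t) * χ₁ t - Real.cos (θ t) * χ₂ t) / nrm t)
    -- `θd(t) = -χ̂_p(t)ᵀ E χ̇_p(t) / ‖χ_p(t)‖`
    (hθd : ∀ t, θd t =
      -((χ₁ t / nrm t) * (-(deriv χ₂ t)) + (χ₂ t / nrm t) * deriv χ₁ t) / nrm t)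
    -- `σ` is the signed angle in `(-π, π]` directed from `χ̂_p` to `ĥ`
    (hσ : ∀ t : ℝ, 0 ≤ t → σ t ∈ Set.Ioc (-π) π ∧
      Real.sin (σ t) = s t ∧
      Real.cos (σ t) = (Real.cos (θ t) * χ₁ t + Real.sin (θ t) * χ₂ t) / nrm t)
    -- saturated angular control law
    (hctrl : ∀ t : ℝ, 0 ≤ t → HasDerivAt θ (sat a b (θd t - kθ * s t)) t)
    -- (1) initial angle difference
    (hinit : σ 0 ≠ π)
    -- (2) saturation-period conditions
    (hupper : ∀ t : ℝ, 0 ≤ t → b < θd t - kθ * s t → σ t ∈ Set.Ico 0 π)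
    (hlower : ∀ t : ℝ, 0 ≤ t → θd t - kθ * s t < a → σ t ∈ Set.Ioc (-π) 0) :
    Tendsto σ atTop (nhds 0) := by
  have hχ₁d : ∀ t : ℝ, HasDerivAt χ₁ (deriv χ₁ t) t := fun t =>
    ((hχ₁.differentiable one_ne_zero) t).hasDerivAt
  have hχ₂d : ∀ t : ℝ, HasDerivAt χ₂ (deriv χ₂ t) t := fun t =>
    ((hχ₂.differentiable one_ne_zero) t).hasDerivAt
  have hQpos : ∀ t : ℝ, 0 ≤ t → 0 < χ₁ t ^ 2 + χ₂ t ^ 2 := fun t ht =>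
    lt_trans hγ (hlow t ht)
  have hNpos : ∀ t : ℝ, 0 ≤ t → 0 < nrm t := fun t ht => by
    rw [hnrm]; exact Real.sqrt_pos.2 (hQpos t ht)
  have hN2 : ∀ t : ℝ, 0 ≤ t → (nrm t) ^ 2 = χ₁ t ^ 2 + χ₂ t ^ 2 := fun t ht => by
    rw [hnrm]; exact Real.sq_sqrt (hQpos t ht).le
  set c : ℝ → ℝ := fun u => (Real.cos (θ u) * χ₁ u + Real.sin (θ u) * χ₂ u) / nrm u with hcdef
  set V : ℝ → ℝ := fun u => 1 - c u with hVdef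
  -- derivative of c
  have hcd : ∀ t : ℝ, 0 ≤ t →
      HasDerivAt c (s t * (θd t - sat a b (θd t - kθ * s t))) t := by
    intro t ht
    have hθt := hctrl t ht
    have hcos : HasDerivAt (fun u => Real.cos (θ u))
        (-Real.sin (θ t) * sat a b (θd t - kθ * s t)) t := by
      simpa [Function.comp_def] using (Real.hasDerivAt_cos (θ t)).comp t hθt
    have hsin : HasDerivAt (fun u => Real.sin (θ u))
        (Real.cos (θ t) * sat a b (θd t - kθ * s t)) t := by
      simpa [Function.comp_def] using (Real.hasDerivAt_sin (θ t)).comp t hθt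
    have hu : HasDerivAt (fun u => Real.cos (θ u) * χ₁ u + Real.sin (θ u) * χ₂ u)
        (-Real.sin (θ t) * sat a b (θd t - kθ * s t) * χ₁ t
          + Real.cos (θ t) * deriv χ₁ t
          + (Real.cos (θ t) * sat a b (θd t - kθ * s t) * χ₂ t
            + Real.sin (θ t) * deriv χ₂ t)) t :=
      (hcos.mul (hχ₁d t)).add (hsin.mul (hχ₂d t))
    have hq : HasDerivAt (fun u => χ₁ u ^ 2 + χ₂ u ^ 2)
        ((2:ℕ) * χ₁ t ^ 1 * deriv χ₁ t + (2:ℕ) * χ₂ t ^ 1 * deriv χ₂ t) t :=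
      ((hχ₁d t).pow 2).add ((hχ₂d t).pow 2)
    have hnd : HasDerivAt nrm
        ((1 / (2 * nrm t)) * (2 * χ₁ t ^ 1 * deriv χ₁ t + 2 * χ₂ t ^ 1 * deriv χ₂ t)) t := by
      have hfun : nrm = fun u => Real.sqrt (χ₁ u ^ 2 + χ₂ u ^ 2) := funext hnrm
      rw [hfun]
      have := (Real.hasDerivAt_sqrt (hQpos t ht).ne').comp t hq
      simpa [hnrm t, Function.comp_def] using this
    have hdiv := hu.div hnd (hNpos t ht).ne'
    refine hdiv.congr_deriv (Eq.symm ?_)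
    generalize sat a b (θd t - kθ * s t) = P
    rw [hs t, hθd t]
    exact (key_id (χ₁ t) (χ₂ t) (deriv χ₁ t) (deriv χ₂ t) (Real.cos (θ t))
      (Real.sin (θ t)) P (nrm t) (hNpos t ht).ne' (hN2 t ht)).symm
  -- derivative of V
  have hVd : ∀ t : ℝ, 0 ≤ t →
      HasDerivAt V (s t * (sat a b (θd t - kθ * s t) - θd t)) t := by
    intro t ht
    have h := (hcd t ht).const_sub 1
    have : -(s t * (θd t - sat a b (θd t - kθ * s t)))
        = s t * (sat a b (θd t - kθ * s t) - θd t) := by ring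
    rwa [this] at h
  -- pointwise facts
  have hVcos : ∀ t : ℝ, 0 ≤ t → V t = 1 - Real.cos (σ t) := fun t ht => by
    simp only [hVdef, hcdef]; rw [(hσ t ht).2.2]
  have hVnonneg : ∀ t : ℝ, 0 ≤ t → 0 ≤ V t := fun t ht => by
    rw [hVcos t ht]; linarith [Real.cos_le_one (σ t)]
  have hssq : ∀ t : ℝ, 0 ≤ t → s t ^ 2 = V t * (2 - V t) := fun t ht => by
    rw [← (hσ t ht).2.1, hVcos t ht, Real.sin_sq]; ring
  -- the key differential inequality
  have hineq : ∀ t : ℝ, 0 ≤ t →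
      s t * (sat a b (θd t - kθ * s t) - θd t) ≤ -(kθ * s t ^ 2) := by
    intro t ht
    set x := θd t - kθ * s t with hx
    rcases lt_or_ge b x with hxb | hxb
    · have hσt := hupper t ht hxb
      have hs0 : 0 ≤ s t := by
        rw [← (hσ t ht).2.1]
        exact Real.sin_nonneg_of_nonneg_of_le_pi hσt.1 hσt.2.le
      have hsat : sat a b x = b := by
        rw [sat, max_eq_left (by linarith), min_eq_right hxb.le]
      rw [hsat]
      have hθdx : θd t = x + kθ * s t := by rw [hx]; ring
      rw [hθdx]
      nlinarith [mul_nonneg hs0 (sub_nonneg.2 hxb.le)]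
    · rcases lt_or_ge x a with hxa | hxa
      · have hσt := hlower t ht hxa
        have hs0 : s t ≤ 0 := by
          rw [← (hσ t ht).2.1]
          exact Real.sin_nonpos_of_nonpos_of_neg_pi_le hσt.2 hσt.1.le
        have hsat : sat a b x = a := by
          rw [sat, max_eq_right hxa.le, min_eq_left (by linarith)]
        rw [hsat]
        have hθdx : θd t = x + kθ * s t := by rw [hx]; ring
        rw [hθdx]
        nlinarith [mul_nonneg (neg_nonneg.2 hs0) (sub_nonneg.2 hxa.le)]
      · have hsat : sat a b x = x := by
          rw [sat, max_eq_left hxa, min_eq_left hxb]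
        rw [hsat]
        have hθdx : θd t = x + kθ * s t := by rw [hx]; ring
        rw [hθdx]
        exact le_of_eq (by ring)
  -- V is antitone on [0, ∞)
  have hVanti : AntitoneOn V (Set.Ici (0:ℝ)) := by
    apply antitoneOn_of_deriv_nonpos (convex_Ici 0)
    · exact fun t ht => (hVd t ht).continuousAt.continuousWithinAt
    · intro t ht
      rw [interior_Ici] at ht
      exact (hVd t (le_of_lt ht)).differentiableAt.differentiableWithinAt
    · intro t ht
      rw [interior_Ici] at ht
      rw [(hVd t ht.le).deriv]
      have := hineq t ht.le
      nlinarith [sq_nonneg (s t)]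
  -- V 0 < 2
  have hV0lt : V 0 < 2 := by
    have h0 := (hσ 0 le_rfl).1
    have habs : |σ 0| < π := by
      rcases abs_lt.2 ⟨h0.1, lt_of_le_of_ne h0.2 hinit⟩ with h; exact h
    have : Real.cos π < Real.cos |σ 0| := by
      apply Real.strictAntiOn_cos ⟨abs_nonneg _, habs.le⟩ ⟨by positivity, le_rfl⟩ habs
    rw [Real.cos_pi, Real.cos_abs] at this
    rw [hVcos 0 le_rfl]; linarith
  set lam : ℝ := kθ * (2 - V 0) with hlam
  have hlampos : 0 < lam := mul_pos hkθ (by linarith)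
  -- W = V * exp(lam t) is antitone
  set W : ℝ → ℝ := fun u => V u * Real.exp (lam * u) with hWdef
  have hWd : ∀ t : ℝ, 0 ≤ t → HasDerivAt W
      (s t * (sat a b (θd t - kθ * s t) - θd t) * Real.exp (lam * t)
        + V t * (Real.exp (lam * t) * lam)) t := by
    intro t ht
    have he : HasDerivAt (fun u => Real.exp (lam * u)) (Real.exp (lam * t) * lam) t := by
      simpa [Function.comp_def] using (Real.hasDerivAt_exp (lam * t)).comp t ((hasDerivAt_id t).const_mul lam)
    exact (hVd t ht).mul he
  have hWanti : AntitoneOn W (Set.Ici (0:ℝ)) := by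
    apply antitoneOn_of_deriv_nonpos (convex_Ici 0)
    · exact fun t ht => (hWd t ht).continuousAt.continuousWithinAt
    · intro t ht
      rw [interior_Ici] at ht
      exact (hWd t ht.le).differentiableAt.differentiableWithinAt
    · intro t ht
      rw [interior_Ici] at ht
      rw [(hWd t ht.le).deriv]
      have hVle : V t ≤ V 0 := hVanti Set.self_mem_Ici (Set.mem_Ici.2 ht.le) ht.le
      have hVnn := hVnonneg t ht.le
      set E := Real.exp (lam * t) with hE
      have he : 0 < E := Real.exp_pos (lam * t)
      have h1 : s t * (sat a b (θd t - kθ * s t) - θd t) * E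
          ≤ -(kθ * (V t * (2 - V t))) * E := by
        have := hineq t ht.le
        rw [hssq t ht.le] at this
        exact mul_le_mul_of_nonneg_right this he.le
      have h2 : kθ * E * V t * (V t - V 0) ≤ 0 :=
        mul_nonpos_of_nonneg_of_nonpos (by positivity) (by linarith)
      rw [hlam]
      nlinarith [h1, h2]
  -- exponential bound on V
  have hVbound : ∀ t : ℝ, 0 ≤ t → V t ≤ V 0 * Real.exp (-(lam * t)) := by
    intro t ht
    have hW := hWanti Set.self_mem_Ici (Set.mem_Ici.2 ht) ht
    have he := Real.exp_pos (lam * t)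
    have hWt : V t * Real.exp (lam * t) ≤ V 0 := by
      have hW0 : W 0 = V 0 := by simp [hWdef]
      rw [hW0] at hW
      simpa [hWdef] using hW
    rw [Real.exp_neg]
    calc V t ≤ V 0 / Real.exp (lam * t) := (le_div_iff₀ he).2 hWt
      _ = V 0 * (Real.exp (lam * t))⁻¹ := by rw [div_eq_mul_inv]
  -- σ² ≤ π²/2 · V
  have hσsq : ∀ t : ℝ, 0 ≤ t → σ t ^ 2 ≤ π ^ 2 / 2 * V t := by
    intro t ht
    have h0 := (hσ t ht).1
    have habs : |σ t| ≤ π := abs_le.2 ⟨h0.1.le, h0.2⟩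
    have hco := Real.cos_le_one_sub_mul_cos_sq habs
    have hπ : (0:ℝ) < π ^ 2 := by positivity
    rw [hVcos t ht]
    have h2 : 2 / π ^ 2 * σ t ^ 2 ≤ 1 - Real.cos (σ t) := by linarith
    rw [div_mul_eq_mul_div, div_le_iff₀ hπ] at h2
    nlinarith [h2]
  -- squeeze
  set g : ℝ → ℝ := fun t => Real.sqrt (π ^ 2 / 2 * (V 0 * Real.exp (-(lam * t)))) with hgdef
  have hgzero : Tendsto g atTop (nhds 0) := by
    have h1 : Tendsto (fun t : ℝ => lam * t) atTop atTop :=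
      Tendsto.const_mul_atTop hlampos tendsto_id
    have h2 : Tendsto (fun t : ℝ => Real.exp (-(lam * t))) atTop (nhds 0) :=
      Real.tendsto_exp_neg_atTop_nhds_zero.comp h1
    have h3 : Tendsto (fun t : ℝ => π ^ 2 / 2 * (V 0 * Real.exp (-(lam * t)))) atTop (nhds 0) := by
      have := (h2.const_mul (V 0)).const_mul (π ^ 2 / 2)
      simpa using this
    have h4 := (Real.continuous_sqrt.tendsto 0).comp h3
    simpa [hgdef, Function.comp_def] using h4
  have hbound : ∀ᶠ t in atTop, |σ t| ≤ g t := by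
    filter_upwards [eventually_ge_atTop (0:ℝ)] with t ht
    have h1 : σ t ^ 2 ≤ π ^ 2 / 2 * (V 0 * Real.exp (-(lam * t))) := by
      have h1 := hσsq t ht
      have h2 := hVbound t ht
      have h3 := mul_le_mul_of_nonneg_left h2 (by positivity : (0:ℝ) ≤ π ^ 2 / 2)
      linarith
    calc |σ t| = Real.sqrt (σ t ^ 2) := by rw [Real.sqrt_sq_eq_abs]
      _ ≤ g t := Real.sqrt_le_sqrt h1
  have hgneg : Tendsto (fun t => -g t) atTop (nhds 0) := by simpa using hgzero.neg
  apply tendsto_of_tendsto_of_tendsto_of_le_of_le' hgneg hgzero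
  · filter_upwards [hbound] with t ht; linarith [(abs_le.1 ht).1]
  · filter_upwards [hbound] with t ht; exact (abs_le.1 ht).2
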